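/- Let M be a map with flag set F and generators s0, s1, s2, and let r0, r1, r2 be the truncation generators on F × {0,1,2}. Then the group ⟨r0, r1, r2⟩ acts transitively on F × {0,1,2}. -/
import Mathlib


/-- the group generated by the truncation generators acts transitively
on F × {0,1,2}. -/
theorem truncation_monodromy_transitive
    {F : Type*} [Fintype F] [Nonempty F]
    (s0 s1 s2 : Equiv.Perm F)
    (hs0i : s0 * s0 = 1) (hs0f : ∀ x, s0 x ≠ x)
    (hs1i : s1 * s1 = 1) (hs1f : ∀ x, s1 x ≠ x)
    (hs2i : s2 * s2 = 1) (hs2f : ∀ x, s2 x ≠ x)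
    (hcomm : s0 * s2 = s2 * s0)
    (hs02i : (s0 * s2) * (s0 * s2) = 1) (hs02f : ∀ x, (s0 * s2) x ≠ x)
    (htrans : ∀ x y : F, ∃ g ∈ Subgroup.closure ({s0, s1, s2} : Set (Equiv.Perm F)), g x = y)
    (r0 r1 r2 : Equiv.Perm (F × Fin 3))
    (hr0 : ∀ Φ : F, r0 (Φ, 0) = (s1 Φ, 0) ∧ r0 (Φ, 1) = (s0 Φ, 1) ∧ r0 (Φ, 2) = (s1 Φ, 2))
    (hr1 : ∀ Φ : F, r1 (Φ, 0) = (s2 Φ, 0) ∧ r1 (Φ, 1) = (Φ, 2) ∧ r1 (Φ, 2) = (Φ, 1))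
    (hr2 : ∀ Φ : F, r2 (Φ, 0) = (Φ, 2) ∧ r2 (Φ, 1) = (s2 Φ, 1) ∧ r2 (Φ, 2) = (Φ, 0)) :
    ∀ x y : F × Fin 3,
      ∃ g ∈ Subgroup.closure ({r0, r1, r2} : Set (Equiv.Perm (F × Fin 3))), g x = y := by
  set H := Subgroup.closure ({r0, r1, r2} : Set (Equiv.Perm (F × Fin 3))) with hH
  have hr0H : r0 ∈ H := Subgroup.subset_closure (by simp)
  have hr1H : r1 ∈ H := Subgroup.subset_closure (by simp)
  have hr2H : r2 ∈ H := Subgroup.subset_closure (by simp)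
  -- move any flag to level 0
  have hmove : ∀ (Φ : F) (i : Fin 3), ∃ g ∈ H, g (Φ, i) = (Φ, 0) := by
    intro Φ i
    fin_cases i
    · exact ⟨1, H.one_mem, rfl⟩
    · refine ⟨r2 * r1, H.mul_mem hr2H hr1H, ?_⟩
      have h1 := (hr1 Φ).2.1
      have h2 := (hr2 Φ).2.2
      simp [Equiv.Perm.mul_apply, h1, h2]
    · exact ⟨r2, hr2H, (hr2 Φ).2.2⟩
  -- the subgroup of permutations of F realizable on level 0
  let S : Subgroup (Equiv.Perm F) :=
    { carrier := {σ | ∃ g ∈ H, ∀ Φ : F, g (Φ, 0) = (σ Φ, 0)},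
      one_mem' := ⟨1, H.one_mem, fun Φ => rfl⟩,
      mul_mem' := by
        rintro σ τ ⟨g, hg, hgs⟩ ⟨k, hk, hks⟩
        exact ⟨g * k, H.mul_mem hg hk, fun Φ => by
          simp [Equiv.Perm.mul_apply, hks Φ, hgs (τ Φ)]⟩,
      inv_mem' := by
        rintro σ ⟨g, hg, hgs⟩
        refine ⟨g⁻¹, H.inv_mem hg, fun Φ => ?_⟩
        have := hgs (σ⁻¹ Φ)
        simp at this
        rw [← this]
        simp }
  have hclos : Subgroup.closure ({s0, s1, s2} : Set (Equiv.Perm F)) ≤ S := by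
    rw [Subgroup.closure_le]
    rintro σ (h | h | h) <;> rw [h]
    · -- s0 realized by r2 * r1 * r0 * r1 * r2
      refine ⟨r2 * r1 * r0 * r1 * r2, ?_, fun Φ => ?_⟩
      · exact H.mul_mem (H.mul_mem (H.mul_mem (H.mul_mem hr2H hr1H) hr0H) hr1H) hr2H
      · simp only [Equiv.Perm.mul_apply]
        rw [(hr2 Φ).1, (hr1 Φ).2.2, (hr0 Φ).2.1, (hr1 (s0 Φ)).2.1, (hr2 (s0 Φ)).2.2]
    · exact ⟨r0, hr0H, fun Φ => (hr0 Φ).1⟩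
    · exact ⟨r1, hr1H, fun Φ => (hr1 Φ).1⟩
  intro x y
  obtain ⟨a, haH, ha⟩ := hmove x.1 x.2
  obtain ⟨b, hbH, hb⟩ := hmove y.1 y.2
  obtain ⟨σ, hσ, hσx⟩ := htrans x.1 y.1
  obtain ⟨g, hgH, hg⟩ := hclos hσ
  refine ⟨b⁻¹ * g * a, H.mul_mem (H.mul_mem (H.inv_mem hbH) hgH) haH, ?_⟩
  simp only [Equiv.Perm.mul_apply]
  rw [show x = (x.1, x.2) from rfl, ha, hg, hσx, ← hb]
  simp
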